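/- (Schwarz–Pick lemma for harmonic K-quasiregular maps into the strip) If f : U → S is harmonic, sense-preserving K-quasiregular (K ≥ 1), then d_S(f(z₁), f(z₂)) ≤ K·d_U(z₁, z₂) for all z₁, z₂ ∈ U. -/

import Mathlib

open Complex Set

/-- The strip `S = {z : -1 < Re z < 1}`. -/
def stripS : Set ℂ := {z : ℂ | -1 < z.re ∧ z.re < 1}

/-- The unit disc. -/
def discU : Set ℂ := {z : ℂ | ‖z‖ < 1}

/-- Hyperbolic density of the strip. -/
noncomputable def rhoS (z : ℂ) : ℝ := (Real.pi / 2) / Real.cos (Real.pi / 2 * z.re)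

/-- Hyperbolic density of the unit disc. -/
noncomputable def rhoU (z : ℂ) : ℝ := 2 / (1 - ‖z‖ ^ 2)

/-- Hyperbolic length of a curve in the strip. -/
noncomputable def hypLenS (γ : ℝ → ℂ) : ℝ := ∫ t in (0:ℝ)..1, rhoS (γ t) * ‖deriv γ t‖

/-- Hyperbolic length of a curve in the disc. -/
noncomputable def hypLenU (γ : ℝ → ℂ) : ℝ := ∫ t in (0:ℝ)..1, rhoU (γ t) * ‖deriv γ t‖

/-- Hyperbolic distance on the strip: infimum of hyperbolic lengths of C¹ curves. -/
noncomputable def dS (z₁ z₂ : ℂ) : ℝ :=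
  sInf { L : ℝ | ∃ γ : ℝ → ℂ, ContDiffOn ℝ 1 γ (Icc 0 1) ∧ γ 0 = z₁ ∧ γ 1 = z₂ ∧
    (∀ t ∈ Icc (0:ℝ) 1, γ t ∈ stripS) ∧ L = hypLenS γ }

/-- Hyperbolic distance on the unit disc. -/
noncomputable def dU (z₁ z₂ : ℂ) : ℝ :=
  sInf { L : ℝ | ∃ γ : ℝ → ℂ, ContDiffOn ℝ 1 γ (Icc 0 1) ∧ γ 0 = z₁ ∧ γ 1 = z₂ ∧
    (∀ t ∈ Icc (0:ℝ) 1, γ t ∈ discU) ∧ L = hypLenU γ }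

/-- The conformal map of the disc onto the strip, inverse of `z ↦ tan (π z / 4)`. -/
noncomputable def phiUS (z : ℂ) : ℂ :=
  (-(2 * Complex.I) / (Real.pi : ℂ)) * Complex.log ((1 + Complex.I * z) / (1 - Complex.I * z))

/-- Inverse hyperbolic tangent. -/
noncomputable def artanh (r : ℝ) : ℝ := Real.log ((1 + r) / (1 - r)) / 2

/-- A real-valued function is harmonic on a set. -/
def HarmonicOnR (u : ℂ → ℝ) (s : Set ℂ) : Prop :=
  ContDiffOn ℝ 2 u s ∧ ∀ z ∈ s,
    fderiv ℝ (fun w => fderiv ℝ u w 1) z 1 + fderiv ℝ (fun w => fderiv ℝ u w Complex.I) z Complex.I = 0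

/-- A complex-valued function is harmonic on a set. -/
def HarmonicOnC (f : ℂ → ℂ) (s : Set ℂ) : Prop :=
  ContDiffOn ℝ 2 f s ∧ ∀ z ∈ s,
    fderiv ℝ (fun w => fderiv ℝ f w 1) z 1 + fderiv ℝ (fun w => fderiv ℝ f w Complex.I) z Complex.I = 0

/-- Wirtinger derivative ∂f/∂z. -/
noncomputable def wderiv (f : ℂ → ℂ) (z : ℂ) : ℂ :=
  (fderiv ℝ f z 1 - Complex.I * fderiv ℝ f z Complex.I) / 2

/-- Wirtinger derivative ∂f/∂z̄. -/
noncomputable def wderivBar (f : ℂ → ℂ) (z : ℂ) : ℂ :=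
  (fderiv ℝ f z 1 + Complex.I * fderiv ℝ f z Complex.I) / 2

/-- Sense-preserving K-quasiregular C¹ map on a set. -/
def QRegOn (K : ℝ) (f : ℂ → ℂ) (s : Set ℂ) : Prop :=
  ContDiffOn ℝ 1 f s ∧ ∀ z ∈ s,
    ‖wderivBar f z‖ < ‖wderiv f z‖ ∧
    ‖wderiv f z‖ + ‖wderivBar f z‖
      ≤ K * (‖wderiv f z‖ - ‖wderivBar f z‖)
open Metric Filter Finset
open scoped Topology ComplexConjugate



theorem exists_primitive_ball {g : ℂ → ℂ} (hg : DifferentiableOn ℂ g (ball (0:ℂ) 1)) :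
    ∃ F : ℂ → ℂ, ∀ z ∈ ball (0:ℂ) 1, HasDerivAt F (g z) z := by
  set p := cauchyPowerSeries g 0 ((1/2 : NNReal) : ℝ) with hp
  have hhalf : HasFPowerSeriesOnBall g p 0 (1/2 : NNReal) := by
    have hsub2 : closedBall (0:ℂ) ((1/2 : NNReal):ℝ) ⊆ ball 0 1 := by
      apply closedBall_subset_ball; norm_num
    exact (hg.mono hsub2).hasFPowerSeriesOnBall (by norm_num)
  have key : ∀ r : NNReal, 0 < r → (r:ℝ) < 1 → HasFPowerSeriesOnBall g p 0 r := by
    intro r hr0 hr1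
    have hsub : closedBall (0:ℂ) r ⊆ ball 0 1 := closedBall_subset_ball hr1
    have h1 : HasFPowerSeriesOnBall g (cauchyPowerSeries g 0 r) 0 r :=
      (hg.mono hsub).hasFPowerSeriesOnBall hr0
    have heq : cauchyPowerSeries g 0 r = p :=
      h1.hasFPowerSeriesAt.eq_formalMultilinearSeries hhalf.hasFPowerSeriesAt
    rwa [heq] at h1
  set a : ℕ → ℂ := fun n => p.coeff n with ha
  -- sum formula
  have hsum : ∀ y ∈ ball (0:ℂ) 1, HasSum (fun n => y ^ n • a n) (g y) := by
    intro y hy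
    have hy1 : ‖y‖ < 1 := mem_ball_zero_iff.mp hy
    set t : ℝ := (‖y‖ + 1) / 2 with ht
    have ht0 : 0 < t := by positivity
    have ht1 : t < 1 := by simp only [ht]; linarith
    have hyt : ‖y‖ < t := by simp only [ht]; linarith
    have hk := key t.toNNReal (by simp [Real.toNNReal_pos, ht0]) (by
      rwa [Real.coe_toNNReal _ ht0.le])
    have hy' : y ∈ Metric.eball (0:ℂ) t.toNNReal := by
      rw [Metric.emetric_ball_nnreal]
      rw [mem_ball_zero_iff, Real.coe_toNNReal _ ht0.le]
      exact hyt
    have := hk.hasSum hy'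
    simp only [zero_add, FormalMultilinearSeries.apply_eq_pow_smul_coeff] at this
    exact this
  -- coefficient bounds
  have hbound : ∀ r : ℝ, 0 < r → r < 1 → ∃ C > 0, ∀ n, ‖a n‖ * r ^ n ≤ C := by
    intro r hr0 hr1
    set t : ℝ := (r + 1) / 2 with ht
    have ht0 : 0 < t := by positivity
    have ht1 : t < 1 := by simp only [ht]; linarith
    have hrt : r < t := by simp only [ht]; linarith
    have hk := key t.toNNReal (by simp [Real.toNNReal_pos, ht0]) (by
      rwa [Real.coe_toNNReal _ ht0.le])
    have hlt : (r.toNNReal : ENNReal) < p.radius := by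
      refine lt_of_lt_of_le ?_ hk.r_le
      exact_mod_cast (Real.toNNReal_lt_toNNReal_iff ht0).mpr hrt
    obtain ⟨C, hC0, hC⟩ := p.norm_mul_pow_le_of_lt_radius hlt
    refine ⟨C, hC0, fun n => ?_⟩
    have := hC n
    rwa [FormalMultilinearSeries.norm_apply_eq_norm_coef, Real.coe_toNNReal _ hr0.le] at this
  refine ⟨fun z => ∑' n, (z ^ (n+1) * a n) / (n+1), ?_⟩
  intro z₀ hz₀
  have hz₀1 : ‖z₀‖ < 1 := mem_ball_zero_iff.mp hz₀
  have hn0 : 0 ≤ ‖z₀‖ := norm_nonneg _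
  set ρ : ℝ := (‖z₀‖ + 1) / 2 with hρ
  set r : ℝ := (ρ + 1) / 2 with hr
  have hρ0 : 0 < ρ := by positivity
  have hρ1 : ρ < 1 := by simp only [hρ]; linarith
  have hzρ : ‖z₀‖ < ρ := by simp only [hρ]; linarith
  have hρr : ρ < r := by simp only [hr]; linarith
  have hr1 : r < 1 := by simp only [hr]; linarith
  have hr0 : 0 < r := hρ0.trans hρr
  obtain ⟨C, hC0, hC⟩ := hbound r hr0 hr1
  -- the uniform bound on ball 0 ρ
  have hkey : ∀ (k : ℕ) (x : ℂ), x ∈ ball (0:ℂ) ρ → ‖x ^ k * a k‖ ≤ C * (ρ/r) ^ k := by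
    intro k x hx
    have hx' : ‖x‖ ≤ ρ := (mem_ball_zero_iff.mp hx).le
    have h1 : ‖x ^ k * a k‖ ≤ ρ ^ k * ‖a k‖ := by
      rw [norm_mul, norm_pow]
      gcongr
    have h2 : ρ ^ k * ‖a k‖ = (ρ/r)^k * (‖a k‖ * r ^ k) := by
      rw [mul_comm (‖a k‖), ← mul_assoc, ← mul_pow, div_mul_cancel₀ _ hr0.ne']
    rw [h2] at h1
    calc ‖x ^ k * a k‖ ≤ (ρ/r)^k * (‖a k‖ * r^k) := h1
      _ ≤ (ρ/r)^k * C := by gcongr; exact hC k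
      _ = C * (ρ/r)^k := by ring
  have hρr1 : ρ / r < 1 := (div_lt_one hr0).mpr hρr
  have hρr0 : 0 ≤ ρ / r := by positivity
  have hsummable : Summable (fun k => C * (ρ/r)^k) :=
    (summable_geometric_of_lt_one hρr0 hρr1).mul_left C
  -- partial sums and their derivatives
  set S : ℕ → ℂ → ℂ := fun N z => ∑ k ∈ range N, (z ^ (k+1) * a k) / (k+1) with hS
  set S' : ℕ → ℂ → ℂ := fun N z => ∑ k ∈ range N, z ^ k * a k with hS'
  have hderiv : ∀ (N : ℕ) (x : ℂ), x ∈ ball (0:ℂ) ρ → HasDerivAt (S N) (S' N x) x := by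
    intro N x _
    refine HasDerivAt.fun_sum fun k _ => ?_
    have h1 : HasDerivAt (fun z : ℂ => z ^ (k+1) * (a k / (k+1)))
        (((k+1:ℕ) : ℂ) * x ^ k * (a k / (k+1))) x := (hasDerivAt_pow (k+1) x).mul_const _
    have hne : ((k:ℂ)+1) ≠ 0 := Nat.cast_add_one_ne_zero k
    have h2 : (((k+1:ℕ) : ℂ)) * x ^ k * (a k / (k+1)) = x ^ k * a k := by
      push_cast
      field_simp
    have h3 : (fun z : ℂ => z ^ (k+1) * (a k / (k+1))) = fun z : ℂ => (z ^ (k+1) * a k) / (k+1) := by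
      funext z; ring
    rw [h2, h3] at h1
    exact h1
  have hupper : TendstoUniformlyOn S' g atTop (ball (0:ℂ) ρ) := by
    have := tendstoUniformlyOn_tsum_nat hsummable
      (f := fun k (x : ℂ) => x ^ k * a k) (s := ball (0:ℂ) ρ) hkey
    refine this.congr_right fun x hx => ?_
    have hx1 : x ∈ ball (0:ℂ) 1 := by
      have := mem_ball_zero_iff.mp hx
      exact mem_ball_zero_iff.mpr (this.trans hρ1)
    have := (hsum x hx1).tsum_eq
    simp only [smul_eq_mul] at this ⊢
    exact this
  have hpt : ∀ x ∈ ball (0:ℂ) ρ, Tendsto (fun N => S N x) atTop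
      (𝓝 (∑' n, (x ^ (n+1) * a n) / (n+1))) := by
    intro x hx
    have hsx : Summable (fun k => (x ^ (k+1) * a k) / (k+1)) := by
      refine Summable.of_norm_bounded hsummable fun k => ?_
      have hx' : ‖x‖ ≤ ρ := (mem_ball_zero_iff.mp hx).le
      have hnk : ‖((k:ℂ)+1)‖ = ((k:ℝ)+1) := by
        have h : ((k:ℂ)+1) = ((k+1 : ℕ) : ℂ) := by push_cast; ring
        rw [h, Complex.norm_natCast]
        push_cast; ring
      have hre : x ^ (k+1) * a k = x * (x^k * a k) := by ring
      have hk1 : (1:ℝ) ≤ (k:ℝ) + 1 := by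
        have : (0:ℝ) ≤ (k:ℝ) := Nat.cast_nonneg k
        linarith
      calc ‖(x ^ (k+1) * a k) / ((k:ℂ)+1)‖ = ‖x‖ * ‖x^k * a k‖ / ((k:ℝ)+1) := by
            rw [norm_div, hnk, hre, norm_mul]
        _ ≤ ‖x‖ * ‖x^k * a k‖ := div_le_self (by positivity) hk1
        _ ≤ 1 * (C * (ρ/r)^k) := mul_le_mul (hx'.trans hρ1.le) (hkey k x hx) (norm_nonneg _) zero_le_one
        _ = C * (ρ/r)^k := one_mul _
    exact hsx.hasSum.tendsto_sum_nat
  exact hasDerivAt_of_tendstoUniformlyOn isOpen_ball hupper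
    (Eventually.of_forall hderiv) hpt (mem_ball_zero_iff.mpr hzρ)


noncomputable def mob (a z : ℂ) : ℂ := (z - a) / (1 - conj a * z)

lemma normSq_lt_one {w : ℂ} (h : ‖w‖ < 1) : normSq w < 1 := by
  rw [Complex.normSq_eq_norm_sq]
  nlinarith [norm_nonneg w]

lemma one_sub_normSq_pos {w : ℂ} (h : ‖w‖ < 1) : 0 < 1 - normSq w := by
  linarith [normSq_lt_one h]

lemma one_sub_normSq_ne {w : ℂ} (h : ‖w‖ < 1) : (1 : ℂ) - (normSq w : ℂ) ≠ 0 := by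
  intro hcon
  have : ((1 - normSq w : ℝ) : ℂ) = 0 := by push_cast; linear_combination hcon
  rw [Complex.ofReal_eq_zero] at this
  linarith [one_sub_normSq_pos h]

lemma mob_den_ne {a z : ℂ} (ha : ‖a‖ < 1) (hz : ‖z‖ < 1) : 1 - conj a * z ≠ 0 := by
  intro h
  have h1 : ‖conj a * z‖ < 1 := by
    rw [norm_mul, RCLike.norm_conj]
    calc ‖a‖ * ‖z‖ ≤ ‖a‖ * 1 := by nlinarith [norm_nonneg z, norm_nonneg a]
      _ < 1 := by linarith
  have : conj a * z = 1 := by linear_combination -h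
  rw [this] at h1; simp at h1

lemma mob_identity (a z : ℂ) :
    normSq (1 - conj a * z) - normSq (z - a) = (1 - normSq a) * (1 - normSq z) := by
  have h : ((normSq (1 - conj a * z) : ℂ)) - normSq (z - a)
      = ((1 - normSq a : ℝ) : ℂ) * ((1 - normSq z : ℝ) : ℂ) := by
    push_cast
    rw [← Complex.mul_conj, ← Complex.mul_conj, ← Complex.mul_conj, ← Complex.mul_conj]
    simp only [map_sub, map_mul, map_one, Complex.conj_conj]
    ring
  exact_mod_cast h

lemma mob_maps {a z : ℂ} (ha : ‖a‖ < 1) (hz : ‖z‖ < 1) : ‖mob a z‖ < 1 := by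
  have hden := mob_den_ne ha hz
  have h1 : 0 < normSq (1 - conj a * z) := normSq_pos.mpr hden
  have h4 : normSq (z - a) < normSq (1 - conj a * z) := by
    nlinarith [normSq_lt_one ha, normSq_lt_one hz, mob_identity a z]
  rw [mob, norm_div]
  rw [div_lt_one (norm_pos_iff.mpr hden)]
  rw [Complex.normSq_eq_norm_sq, Complex.normSq_eq_norm_sq] at h4
  nlinarith [norm_nonneg (z - a), norm_nonneg (1 - conj a * z)]

lemma mob_self (a : ℂ) : mob a a = 0 := by simp [mob]

lemma mob_hasDerivAt {a z : ℂ} (h : 1 - conj a * z ≠ 0) :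
    HasDerivAt (mob a) ((1 - normSq a) / (1 - conj a * z)^2) z := by
  have h1 : HasDerivAt (fun w : ℂ => w - a) 1 z := (hasDerivAt_id z).sub_const a
  have h2 : HasDerivAt (fun w : ℂ => 1 - conj a * w) (-conj a) z := by
    simpa using ((hasDerivAt_id z).const_mul (conj a)).const_sub 1
  have := h1.div h2 h
  convert (show HasDerivAt (fun w => (w - a) / (1 - conj a * w)) _ z from this) using 1
  congr 1
  rw [← Complex.mul_conj]
  ring

lemma schwarz_pick {h : ℂ → ℂ} (hd : DifferentiableOn ℂ h (ball 0 1))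
    (hm : MapsTo h (ball 0 1) (ball 0 1)) {z : ℂ} (hz : z ∈ ball (0:ℂ) 1) :
    ‖deriv h z‖ * (1 - ‖z‖^2) ≤ 1 - ‖h z‖^2 := by
  have hz1 : ‖z‖ < 1 := mem_ball_zero_iff.mp hz
  have hw1 : ‖h z‖ < 1 := mem_ball_zero_iff.mp (hm hz)
  set w := h z with hw
  set G : ℂ → ℂ := fun x => mob w (h (mob (-z) x)) with hG
  have hmob1 : ∀ x ∈ ball (0:ℂ) 1, mob (-z) x ∈ ball (0:ℂ) 1 := by
    intro x hx
    exact mem_ball_zero_iff.mpr (mob_maps (by simpa using hz1) (mem_ball_zero_iff.mp hx))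
  have hGd : DifferentiableOn ℂ G (ball 0 1) := by
    intro x hx
    have hx1 : ‖x‖ < 1 := mem_ball_zero_iff.mp hx
    have hd1 : DifferentiableAt ℂ (mob (-z)) x :=
      (mob_hasDerivAt (mob_den_ne (by simpa using hz1) hx1)).differentiableAt
    have hin := hmob1 x hx
    have hd2 : DifferentiableAt ℂ h (mob (-z) x) :=
      (hd _ hin).differentiableAt (isOpen_ball.mem_nhds hin)
    have hin2 : ‖h (mob (-z) x)‖ < 1 := mem_ball_zero_iff.mp (hm hin)
    have hd3 : DifferentiableAt ℂ (mob w) (h (mob (-z) x)) :=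
      (mob_hasDerivAt (mob_den_ne hw1 hin2)).differentiableAt
    have hcomp : DifferentiableAt ℂ (mob w ∘ h ∘ mob (-z)) x :=
      DifferentiableAt.comp x hd3 (DifferentiableAt.comp x hd2 hd1)
    exact hcomp.differentiableWithinAt
  have hGm : MapsTo G (ball 0 1) (ball (G 0) 1) := by
    intro x hx
    have hG0 : G 0 = 0 := by
      simp only [hG]
      have : mob (-z) 0 = z := by simp [mob]
      rw [this, ← hw, mob_self]
    rw [hG0]
    have hin := hmob1 x hx
    have hin2 : ‖h (mob (-z) x)‖ < 1 := mem_ball_zero_iff.mp (hm hin)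
    exact mem_ball_zero_iff.mpr (mob_maps hw1 hin2)
  have hSch := Complex.norm_deriv_le_div_of_mapsTo_ball hGd (hGm.mono_right ball_subset_closedBall) one_pos
  have hmz : mob (-z) 0 = z := by simp [mob]
  have hdz : DifferentiableAt ℂ h z := (hd _ hz).differentiableAt (isOpen_ball.mem_nhds hz)
  have hD1 : HasDerivAt (mob (-z)) (1 - (normSq z : ℂ)) 0 := by
    have := mob_hasDerivAt (a := -z) (z := (0:ℂ)) (by simp)
    simpa using this
  have hD2 : HasDerivAt h (deriv h z) z := hdz.hasDerivAt
  have hD3 : HasDerivAt (mob w) (1 / (1 - (normSq w : ℂ))) w := by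
    have hne : 1 - conj w * w ≠ 0 := by
      rw [show conj w * w = (normSq w : ℂ) by rw [mul_comm, Complex.mul_conj]]
      exact one_sub_normSq_ne hw1
    have := mob_hasDerivAt (a := w) (z := w) hne
    rw [show conj w * w = (normSq w : ℂ) by rw [mul_comm, Complex.mul_conj]] at this
    convert this using 1
    rw [pow_two, div_mul_eq_div_div, div_self (one_sub_normSq_ne hw1)]
  have hpt : h (mob (-z) 0) = w := by rw [hmz]
  have h12 : HasDerivAt (fun x => h (mob (-z) x)) (deriv h z * (1 - (normSq z : ℂ))) 0 := by
    have hg : HasDerivAt h (deriv h z) (mob (-z) 0) := by rw [hmz]; exact hD2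
    exact HasDerivAt.comp 0 hg hD1
  have hchain : HasDerivAt G ((1 / (1 - (normSq w:ℂ))) * (deriv h z * (1 - (normSq z:ℂ)))) 0 := by
    have hg : HasDerivAt (mob w) (1 / (1 - (normSq w:ℂ))) (h (mob (-z) 0)) := by
      rw [hpt]; exact hD3
    exact HasDerivAt.comp 0 hg h12
  have hposw : 0 < 1 - normSq w := one_sub_normSq_pos hw1
  have hposz : 0 < 1 - normSq z := one_sub_normSq_pos hz1
  rw [hchain.deriv] at hSch
  have e1 : ‖(1 / (1 - (normSq w:ℂ))) * (deriv h z * (1 - (normSq z:ℂ)))‖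
      = (‖deriv h z‖ * (1-normSq z)) / (1-normSq w) := by
    rw [norm_mul, norm_mul]
    rw [show ((1:ℂ) - (normSq w:ℂ)) = ((1-normSq w : ℝ):ℂ) by push_cast; ring]
    rw [show ((1:ℂ) - (normSq z:ℂ)) = ((1-normSq z : ℝ):ℂ) by push_cast; ring]
    rw [norm_div, norm_one, Complex.norm_real, Complex.norm_real, Real.norm_eq_abs, Real.norm_eq_abs,
      abs_of_pos hposw, abs_of_pos hposz]
    ring
  rw [e1] at hSch
  norm_num at hSch
  rw [div_le_one hposw] at hSch
  rw [Complex.normSq_eq_norm_sq, Complex.normSq_eq_norm_sq] at hSch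
  simpa using hSch



noncomputable def psiST (w : ℂ) : ℂ := Complex.tan (((Real.pi/4 : ℝ) : ℂ) * w)

lemma cos_sq_sub_sin_sq (ζ : ℂ) :
    ‖Complex.cos ζ‖^2 - ‖Complex.sin ζ‖^2 = Real.cos (2 * ζ.re) := by
  have h1 : Complex.cos ζ * conj (Complex.cos ζ) - Complex.sin ζ * conj (Complex.sin ζ)
      = Complex.cos (ζ + conj ζ) := by
    rw [← Complex.cos_conj, ← Complex.sin_conj, Complex.cos_add]
  have h2 : ζ + conj ζ = ((2 * ζ.re : ℝ) : ℂ) := by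
    rw [Complex.add_conj]; try push_cast; try ring
  have h3 := congrArg Complex.re (h1.trans (by rw [h2, ← Complex.ofReal_cos]))
  rw [Complex.sub_re, Complex.mul_conj, Complex.mul_conj, Complex.ofReal_re,
    Complex.ofReal_re, Complex.ofReal_re] at h3
  rw [← Complex.normSq_eq_norm_sq, ← Complex.normSq_eq_norm_sq]
  exact h3

lemma zeta_re (w : ℂ) : (((Real.pi/4 : ℝ) : ℂ) * w).re = Real.pi/4 * w.re := by
  simp [Complex.mul_re]

lemma two_zeta_re (w : ℂ) : 2 * (((Real.pi/4 : ℝ) : ℂ) * w).re = Real.pi/2 * w.re := by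
  rw [zeta_re]; ring

lemma strip_cos_pos {w : ℂ} (h1 : -1 < w.re) (h2 : w.re < 1) :
    0 < Real.cos (Real.pi/2 * w.re) := by
  have hπ := Real.pi_pos
  exact Real.cos_pos_of_mem_Ioo ⟨by nlinarith, by nlinarith⟩

lemma strip_cos_ne {w : ℂ} (h1 : -1 < w.re) (h2 : w.re < 1) :
    Complex.cos (((Real.pi/4 : ℝ) : ℂ) * w) ≠ 0 := by
  intro hcon
  have := cos_sq_sub_sin_sq (((Real.pi/4 : ℝ) : ℂ) * w)
  rw [hcon, two_zeta_re] at this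
  simp only [norm_zero] at this
  nlinarith [strip_cos_pos h1 h2, norm_nonneg (Complex.sin (((Real.pi/4 : ℝ) : ℂ) * w)),
    sq_nonneg ‖Complex.sin (((Real.pi/4 : ℝ) : ℂ) * w)‖]

lemma psi_maps {w : ℂ} (h1 : -1 < w.re) (h2 : w.re < 1) : ‖psiST w‖ < 1 := by
  set ζ := ((Real.pi/4 : ℝ) : ℂ) * w with hζ
  have hcne := strip_cos_ne h1 h2
  have hkey := cos_sq_sub_sin_sq ζ
  rw [two_zeta_re] at hkey
  have hpos := strip_cos_pos h1 h2
  have hc0 : 0 < ‖Complex.cos ζ‖ := norm_pos_iff.mpr hcne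
  have hlt : ‖Complex.sin ζ‖ < ‖Complex.cos ζ‖ := by
    nlinarith [norm_nonneg (Complex.sin ζ)]
  rw [psiST, Complex.tan_eq_sin_div_cos, norm_div]
  rw [div_lt_one hc0]
  exact hlt

lemma psi_hasDerivAt {w : ℂ} (h1 : -1 < w.re) (h2 : w.re < 1) :
    HasDerivAt psiST (1 / Complex.cos (((Real.pi/4 : ℝ) : ℂ) * w)^2 * ((Real.pi/4 : ℝ) : ℂ)) w := by
  have hcne := strip_cos_ne h1 h2
  have h0 : HasDerivAt (fun z : ℂ => ((Real.pi/4 : ℝ) : ℂ) * z) ((Real.pi/4 : ℝ) : ℂ) w := by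
    simpa using (hasDerivAt_id w).const_mul (((Real.pi/4 : ℝ) : ℂ))
  exact HasDerivAt.comp w (Complex.hasDerivAt_tan hcne) h0

lemma rhoS_eq_density {w : ℂ} (h1 : -1 < w.re) (h2 : w.re < 1) :
    rhoS w = 2 * ‖1 / Complex.cos (((Real.pi/4 : ℝ) : ℂ) * w)^2 * ((Real.pi/4 : ℝ) : ℂ)‖
      / (1 - ‖psiST w‖^2) := by
  set ζ := ((Real.pi/4 : ℝ) : ℂ) * w with hζ
  have hcne := strip_cos_ne h1 h2
  have hkey := cos_sq_sub_sin_sq ζ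
  rw [two_zeta_re] at hkey
  have hpos := strip_cos_pos h1 h2
  have hc0 : 0 < ‖Complex.cos ζ‖ := norm_pos_iff.mpr hcne
  have hπ := Real.pi_pos
  have e1 : ‖1 / Complex.cos ζ^2 * ((Real.pi/4 : ℝ) : ℂ)‖ = (Real.pi/4) / ‖Complex.cos ζ‖^2 := by
    rw [norm_mul, norm_div, norm_one, norm_pow, Complex.norm_real]
    rw [Real.norm_of_nonneg (by positivity)]
    ring
  have e2 : 1 - ‖psiST w‖^2 = Real.cos (Real.pi/2 * w.re) / ‖Complex.cos ζ‖^2 := by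
    rw [psiST, Complex.tan_eq_sin_div_cos, norm_div, div_pow, ← hζ, ← hkey]
    have hc2 : ‖Complex.cos ζ‖ ^ 2 ≠ 0 := by positivity
    rw [sub_div, div_self hc2]
  rw [e1, e2, rhoS]
  have hA : (0:ℝ) < ‖Complex.cos ζ‖^2 := by positivity
  have h5 : 0 < Real.cos (Real.pi/2 * w.re) / ‖Complex.cos ζ‖^2 := by positivity
  rw [eq_div_iff (ne_of_gt h5)]
  rw [div_mul_div_comm, mul_comm (Real.pi/2) (Real.cos (Real.pi/2*w.re)),
    mul_div_mul_left _ _ (ne_of_gt hpos), ← mul_div_assoc]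
  congr 1
  ring




lemma discU_eq : discU = ball (0:ℂ) 1 := by
  ext z
  simp [discU, mem_ball_zero_iff]

lemma isOpen_discU : IsOpen discU := by rw [discU_eq]; exact isOpen_ball

lemma clm_decomp {E : Type*} [NormedAddCommGroup E] [NormedSpace ℝ E]
    (T : ℂ →L[ℝ] E) (v : ℂ) : T v = v.re • T 1 + v.im • T I := by
  have hv : v = v.re • (1:ℂ) + v.im • I := by
    simp [Complex.real_smul, Complex.re_add_im]
  conv_lhs => rw [hv]
  rw [map_add, map_smul, map_smul]

lemma conj_decomp (v : ℂ) : conj v = (v.re : ℂ) - (v.im : ℂ) * I := by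
  nth_rewrite 1 [← Complex.re_add_im v]
  simp only [map_add, map_mul, Complex.conj_ofReal, Complex.conj_I]
  ring

lemma fderiv_eq_wirtinger (f : ℂ → ℂ) (z v : ℂ) :
    fderiv ℝ f z v = wderiv f z * v + wderivBar f z * conj v := by
  rw [clm_decomp (fderiv ℝ f z) v, wderiv, wderivBar, conj_decomp]
  rw [Complex.real_smul, Complex.real_smul]
  nth_rewrite 3 [← Complex.re_add_im v]
  ring_nf
  rw [Complex.I_sq]
  ring

lemma fderiv_norm_bound (f : ℂ → ℂ) (z v : ℂ) :
    ‖fderiv ℝ f z v‖ ≤ (‖wderiv f z‖ + ‖wderivBar f z‖) * ‖v‖ := by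
  rw [fderiv_eq_wirtinger]
  calc ‖wderiv f z * v + wderivBar f z * conj v‖
      ≤ ‖wderiv f z * v‖ + ‖wderivBar f z * conj v‖ := norm_add_le _ _
    _ = ‖wderiv f z‖ * ‖v‖ + ‖wderivBar f z‖ * ‖v‖ := by
        rw [norm_mul, norm_mul, RCLike.norm_conj]
    _ = (‖wderiv f z‖ + ‖wderivBar f z‖) * ‖v‖ := by ring

/-- The holomorphic "gradient" `u_x - i u_y` of the real part. -/
noncomputable def gfun (f : ℂ → ℂ) (z : ℂ) : ℂ := wderiv f z + conj (wderivBar f z)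

lemma gfun_eq (f : ℂ → ℂ) (z : ℂ) :
    gfun f z = ((fderiv ℝ f z 1).re : ℂ) - I * ((fderiv ℝ f z I).re : ℂ) := by
  rw [gfun, wderiv, wderivBar]
  set p := fderiv ℝ f z 1
  set q := fderiv ℝ f z I
  have hp := Complex.add_conj p
  have hq := Complex.add_conj q
  simp only [map_div₀, map_add, map_mul, Complex.conj_I, map_ofNat]
  push_cast at hp hq
  linear_combination hp / 2 - I * hq / 2

lemma gfun_sub_wderiv (f : ℂ → ℂ) (z : ℂ) :
    ‖wderiv f z‖ - ‖wderivBar f z‖ ≤ ‖gfun f z‖ := by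
  have h : wderiv f z = gfun f z - conj (wderivBar f z) := by rw [gfun]; ring
  calc ‖wderiv f z‖ - ‖wderivBar f z‖
      = ‖gfun f z - conj (wderivBar f z)‖ - ‖wderivBar f z‖ := by rw [← h]
    _ ≤ (‖gfun f z‖ + ‖conj (wderivBar f z)‖) - ‖wderivBar f z‖ := by
        have := norm_sub_le (gfun f z) (conj (wderivBar f z))
        linarith
    _ = ‖gfun f z‖ := by rw [RCLike.norm_conj]; ring

theorem gfun_hasDerivAt {f : ℂ → ℂ} (hharm : HarmonicOnC f discU)
    {z₀ : ℂ} (hz : z₀ ∈ discU) :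
    ∃ c : ℂ, HasDerivAt (gfun f) c z₀ := by
  have hopen := isOpen_discU
  have hf2 : ContDiffOn ℝ 2 f discU := hharm.1
  have hCA : ContDiffAt ℝ 2 f z₀ := hf2.contDiffAt (hopen.mem_nhds hz)
  have hd1 : ContDiffAt ℝ 1 (fderiv ℝ f) z₀ := hCA.fderiv_right (by norm_num)
  have hDd : DifferentiableAt ℝ (fderiv ℝ f) z₀ := hd1.differentiableAt (by norm_num)
  set D := fderiv ℝ (fderiv ℝ f) z₀ with hD
  have hDD : HasFDerivAt (fderiv ℝ f) D z₀ := hDd.hasFDerivAt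
  have hev : ∀ᶠ y in 𝓝 z₀, HasFDerivAt f (fderiv ℝ f y) y := by
    filter_upwards [hopen.mem_nhds hz] with y hy
    exact ((hf2.differentiableOn (by norm_num)).differentiableAt (hopen.mem_nhds hy)).hasFDerivAt
  have hsymm := second_derivative_symmetric_of_eventually hev hDD
  -- derivatives of the partial-derivative functions
  have hp : HasFDerivAt (fun y => fderiv ℝ f y 1)
      ((ContinuousLinearMap.apply ℝ ℂ (1:ℂ)).comp D) z₀ :=
    (ContinuousLinearMap.apply ℝ ℂ (1:ℂ)).hasFDerivAt.comp z₀ hDD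
  have hq : HasFDerivAt (fun y => fderiv ℝ f y I)
      ((ContinuousLinearMap.apply ℝ ℂ I).comp D) z₀ :=
    (ContinuousLinearMap.apply ℝ ℂ I).hasFDerivAt.comp z₀ hDD
  set P' := (ContinuousLinearMap.apply ℝ ℂ (1:ℂ)).comp D with hP'
  set Q' := (ContinuousLinearMap.apply ℝ ℂ I).comp D with hQ'
  -- Laplace equation
  have hlap : D 1 1 + D I I = 0 := by
    have h0 := hharm.2 z₀ hz
    rw [hp.fderiv] at h0
    rw [hq.fderiv] at h0
    simpa [hP', hQ', ContinuousLinearMap.comp_apply, ContinuousLinearMap.apply_apply] using h0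
  -- real derivative of gfun
  have h1 : HasFDerivAt (fun y => (((fderiv ℝ f y 1).re : ℝ) : ℂ))
      (Complex.ofRealCLM.comp (Complex.reCLM.comp P')) z₀ :=
    Complex.ofRealCLM.hasFDerivAt.comp z₀ (Complex.reCLM.hasFDerivAt.comp z₀ hp)
  have h2 : HasFDerivAt (fun y => (((fderiv ℝ f y I).re : ℝ) : ℂ))
      (Complex.ofRealCLM.comp (Complex.reCLM.comp Q')) z₀ :=
    Complex.ofRealCLM.hasFDerivAt.comp z₀ (Complex.reCLM.hasFDerivAt.comp z₀ hq)
  have h2' : HasFDerivAt (fun y => I * (((fderiv ℝ f y I).re : ℝ) : ℂ))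
      (I • (Complex.ofRealCLM.comp (Complex.reCLM.comp Q'))) z₀ := h2.const_mul I
  have hG : HasFDerivAt (gfun f)
      ((Complex.ofRealCLM.comp (Complex.reCLM.comp P'))
        - I • (Complex.ofRealCLM.comp (Complex.reCLM.comp Q'))) z₀ := by
    have := h1.sub h2'
    have heq : (fun y => (((fderiv ℝ f y 1).re : ℝ) : ℂ) - I * (((fderiv ℝ f y I).re : ℝ) : ℂ))
        = gfun f := funext fun y => (gfun_eq f y).symm
    rw [← heq]; exact this
  set G := (Complex.ofRealCLM.comp (Complex.reCLM.comp P'))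
        - I • (Complex.ofRealCLM.comp (Complex.reCLM.comp Q')) with hGdef
  have hGv : ∀ v, G v = ((D v 1).re : ℂ) - I * ((D v I).re : ℂ) := by
    intro v
    simp [hGdef, hP', hQ', ContinuousLinearMap.comp_apply, ContinuousLinearMap.apply_apply,
      Complex.real_smul]
  -- Cauchy-Riemann for G
  have hCR : G I = I * G 1 := by
    rw [hGv, hGv]
    rw [hsymm I 1]
    have hII : D I I = - D 1 1 := by linear_combination hlap
    rw [hII]
    simp only [Complex.neg_re, Complex.ofReal_neg]
    ring_nf
    rw [Complex.I_sq]
    ring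
  -- G is multiplication by G 1
  have hmul : ∀ v, G v = v * G 1 := by
    intro v
    rw [clm_decomp G v, hCR, Complex.real_smul, Complex.real_smul]
    nth_rewrite 3 [← Complex.re_add_im v]
    ring
  -- upgrade to complex differentiability
  have hres : (ContinuousLinearMap.smulRight (1 : ℂ →L[ℂ] ℂ) (G 1)).restrictScalars ℝ = G := by
    ext v
    simp only [ContinuousLinearMap.coe_restrictScalars', ContinuousLinearMap.smulRight_apply,
      ContinuousLinearMap.one_apply, smul_eq_mul]
    exact (hmul v).symm
  have : HasFDerivAt (𝕜 := ℂ) (gfun f) (ContinuousLinearMap.smulRight (1 : ℂ →L[ℂ] ℂ) (G 1)) z₀ :=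
    hasFDerivAt_of_restrictScalars ℝ hG hres
  exact ⟨G 1, by simpa using this.hasDerivAt⟩
-- continuation: primitive with matching real part
theorem exists_F {f : ℂ → ℂ} (hharm : HarmonicOnC f discU) :
    ∃ F : ℂ → ℂ, (∀ z ∈ discU, HasDerivAt F (gfun f z) z) ∧
      (∀ z ∈ discU, (F z).re = (f z).re) := by
  have hgd : DifferentiableOn ℂ (gfun f) (ball (0:ℂ) 1) := by
    rw [← discU_eq]
    intro z hz
    obtain ⟨c, hc⟩ := gfun_hasDerivAt hharm hz
    exact hc.differentiableAt.differentiableWithinAt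
  obtain ⟨F₀, hF₀⟩ := exists_primitive_ball hgd
  have hF₀' : ∀ z ∈ discU, HasDerivAt F₀ (gfun f z) z := by
    intro z hz; exact hF₀ z (by rwa [← discU_eq])
  set c : ℝ := (F₀ 0).re - (f 0).re with hcdef
  have h0 : (0:ℂ) ∈ discU := by simp [discU]
  set h : ℂ → ℝ := fun z => (F₀ z).re - (f z).re with hh
  have hfdOn : DifferentiableOn ℝ f discU := hharm.1.differentiableOn (by norm_num)
  have hfd : ∀ x ∈ discU, DifferentiableAt ℝ f x := fun x hx =>
    hfdOn.differentiableAt (isOpen_discU.mem_nhds hx)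
  have hkey : ∀ x ∈ discU, HasFDerivAt h (0 : ℂ →L[ℝ] ℝ) x := by
    intro x hx
    have hFd : HasFDerivAt F₀
        ((ContinuousLinearMap.smulRight (1 : ℂ →L[ℂ] ℂ) (gfun f x)).restrictScalars ℝ) x :=
      ((hF₀' x hx).hasFDerivAt).restrictScalars ℝ
    have hre1 : HasFDerivAt (fun z => (F₀ z).re)
        (Complex.reCLM.comp
          ((ContinuousLinearMap.smulRight (1 : ℂ →L[ℂ] ℂ) (gfun f x)).restrictScalars ℝ)) x :=
      Complex.reCLM.hasFDerivAt.comp x hFd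
    have hre2 : HasFDerivAt (fun z => (f z).re)
        (Complex.reCLM.comp (fderiv ℝ f x)) x :=
      Complex.reCLM.hasFDerivAt.comp x (hfd x hx).hasFDerivAt
    have hsub := hre1.sub hre2
    have hzero : (Complex.reCLM.comp
          ((ContinuousLinearMap.smulRight (1 : ℂ →L[ℂ] ℂ) (gfun f x)).restrictScalars ℝ))
        - Complex.reCLM.comp (fderiv ℝ f x) = 0 := by
      refine ContinuousLinearMap.ext fun v => ?_
      simp only [ContinuousLinearMap.sub_apply, ContinuousLinearMap.comp_apply,
        ContinuousLinearMap.coe_restrictScalars', ContinuousLinearMap.smulRight_apply,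
        ContinuousLinearMap.one_apply, smul_eq_mul, Complex.reCLM_apply,
        ContinuousLinearMap.zero_apply]
      rw [clm_decomp (fderiv ℝ f x) v, gfun_eq]
      set p := fderiv ℝ f x 1
      set q := fderiv ℝ f x I
      simp only [Complex.add_re, Complex.real_smul, Complex.mul_re, Complex.sub_re,
        Complex.sub_im, Complex.mul_im, Complex.ofReal_re, Complex.ofReal_im,
        Complex.I_re, Complex.I_im]
      ring
    rw [hzero] at hsub
    exact hsub
  have hconv : Convex ℝ discU := by rw [discU_eq]; exact convex_ball 0 1
  have hdiffOn : DifferentiableOn ℝ h discU := fun x hx =>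
    (hkey x hx).differentiableAt.differentiableWithinAt
  have hbound : ∀ x ∈ discU, ‖fderivWithin ℝ h discU x‖ ≤ 0 := by
    intro x hx
    rw [fderivWithin_of_mem_nhds (isOpen_discU.mem_nhds hx), (hkey x hx).fderiv]
    simp
  refine ⟨fun z => F₀ z - (c:ℂ), fun z hz => (hF₀' z hz).sub_const _, fun z hz => ?_⟩
  have := hconv.norm_image_sub_le_of_norm_fderivWithin_le hdiffOn hbound h0 hz
  simp only [zero_mul] at this
  have heq : h z = h 0 := by
    have : ‖h z - h 0‖ ≤ 0 := this
    have h2 : h z - h 0 = 0 := by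
      have := norm_nonneg (h z - h 0)
      have : ‖h z - h 0‖ = 0 := le_antisymm ‹‖h z - h 0‖ ≤ 0› this
      exact norm_eq_zero.mp this
    linarith [sub_eq_zero.mp h2]
  simp only [hh] at heq
  simp only [Complex.sub_re, Complex.ofReal_re, hcdef]
  linarith
-- ===== Key pointwise inequality =====
lemma rhoS_pos {w : ℂ} (hw : w ∈ stripS) : 0 < rhoS w := by
  have := strip_cos_pos hw.1 hw.2
  rw [rhoS]
  positivity

theorem key_ineq {K : ℝ} (hK : 1 ≤ K) {f : ℂ → ℂ} (hharm : HarmonicOnC f discU)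
    (hqr : QRegOn K f discU) (hmap : Set.MapsTo f discU stripS) {z : ℂ} (hz : z ∈ discU) :
    rhoS (f z) * (‖wderiv f z‖ + ‖wderivBar f z‖) ≤ K * rhoU z := by
  obtain ⟨F, hFd, hFre⟩ := exists_F hharm
  have hFs : ∀ x ∈ discU, -1 < (F x).re ∧ (F x).re < 1 := by
    intro x hx
    have hfx := hmap hx
    rw [hFre x hx]
    exact ⟨hfx.1, hfx.2⟩
  set h : ℂ → ℂ := fun x => psiST (F x) with hhdef
  have hdm : DifferentiableOn ℂ h (ball 0 1) := by
    intro x hx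
    have hx' : x ∈ discU := by rwa [discU_eq]
    obtain ⟨ha, hb⟩ := hFs x hx'
    exact ((psi_hasDerivAt ha hb).comp x (hFd x hx')).differentiableAt.differentiableWithinAt
  have hmm : MapsTo h (ball 0 1) (ball 0 1) := by
    intro x hx
    have hx' : x ∈ discU := by rwa [discU_eq]
    obtain ⟨ha, hb⟩ := hFs x hx'
    exact mem_ball_zero_iff.mpr (psi_maps ha hb)
  obtain ⟨ha, hb⟩ := hFs z hz
  have hz' : z ∈ ball (0:ℂ) 1 := by rwa [← discU_eq]
  have hcomp := (psi_hasDerivAt (w := F z) ha hb).comp z (hFd z hz)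
  have hchain : HasDerivAt h
      ((1 / Complex.cos (((Real.pi/4 : ℝ) : ℂ) * F z)^2 * ((Real.pi/4 : ℝ) : ℂ)) * gfun f z) z :=
    hcomp
  have hSP := schwarz_pick hdm hmm hz'
  rw [hchain.deriv] at hSP
  rw [norm_mul] at hSP
  have hhz : h z = psiST (F z) := rfl
  rw [hhz] at hSP
  have hden := rhoS_eq_density (w := F z) ha hb
  set A : ℝ := ‖1 / Complex.cos (((Real.pi/4 : ℝ) : ℂ) * F z)^2 * ((Real.pi/4 : ℝ) : ℂ)‖ with hA
  set Bv : ℝ := ‖psiST (F z)‖ with hB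
  set G : ℝ := ‖gfun f z‖ with hG
  have hB1 : Bv < 1 := psi_maps ha hb
  have hB0 : 0 ≤ Bv := norm_nonneg _
  have h1B : 0 < 1 - Bv^2 := by nlinarith
  have hz1 : ‖z‖ < 1 := mem_ball_zero_iff.mp hz'
  have h1z : 0 < 1 - ‖z‖^2 := by nlinarith [norm_nonneg z]
  -- main density bound : rhoS (F z) * G ≤ rhoU z
  have hmain : rhoS (F z) * G ≤ rhoU z := by
    rw [hden, rhoU]
    rw [div_mul_eq_mul_div, div_le_div_iff₀ h1B h1z]
    nlinarith [hSP]
  -- QR bound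
  obtain ⟨hlt, hqrb⟩ := hqr.2 z hz
  have hKG : ‖wderiv f z‖ + ‖wderivBar f z‖ ≤ K * G := by
    calc ‖wderiv f z‖ + ‖wderivBar f z‖ ≤ K * (‖wderiv f z‖ - ‖wderivBar f z‖) := hqrb
      _ ≤ K * G := by
          apply mul_le_mul_of_nonneg_left _ (by linarith : (0:ℝ) ≤ K)
          exact gfun_sub_wderiv f z
  have hρ : 0 < rhoS (f z) := rhoS_pos (hmap hz)
  have hre : rhoS (F z) = rhoS (f z) := by rw [rhoS, rhoS, hFre z hz]
  calc rhoS (f z) * (‖wderiv f z‖ + ‖wderivBar f z‖)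
      ≤ rhoS (f z) * (K * G) := mul_le_mul_of_nonneg_left hKG hρ.le
    _ = K * (rhoS (F z) * G) := by rw [hre]; ring
    _ ≤ K * rhoU z := mul_le_mul_of_nonneg_left hmain (by linarith)

-- ===== transport of curves =====
theorem pushforward_len {K : ℝ} (hK : 1 ≤ K) {f : ℂ → ℂ} (hharm : HarmonicOnC f discU)
    (hqr : QRegOn K f discU) (hmap : Set.MapsTo f discU stripS)
    {γ : ℝ → ℂ} (hγc : ContDiffOn ℝ 1 γ (Icc 0 1)) (hγm : ∀ t ∈ Icc (0:ℝ) 1, γ t ∈ discU) :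
    hypLenS (f ∘ γ) ≤ K * hypLenU γ := by
  set φ := f ∘ γ with hφ
  have hφc : ContDiffOn ℝ 1 φ (Icc 0 1) := hqr.1.comp hγc (fun t ht => hγm t ht)
  have hγcont : ContinuousOn γ (Icc 0 1) := hγc.continuousOn
  have hφcont : ContinuousOn φ (Icc 0 1) := hφc.continuousOn
  have huniq : UniqueDiffOn ℝ (Icc (0:ℝ) 1) := uniqueDiffOn_Icc zero_lt_one
  have hdγ : ContinuousOn (derivWithin γ (Icc 0 1)) (Icc 0 1) :=
    hγc.continuousOn_derivWithin huniq le_rfl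
  have hdφ : ContinuousOn (derivWithin φ (Icc 0 1)) (Icc 0 1) :=
    hφc.continuousOn_derivWithin huniq le_rfl
  have hφs : ∀ t ∈ Icc (0:ℝ) 1, φ t ∈ stripS := fun t ht => hmap (hγm t ht)
  -- continuity of the comparison functions
  have hrhoS : ContinuousOn (fun t => rhoS (φ t)) (Icc 0 1) := by
    have hcos : ContinuousOn (fun t => Real.cos (Real.pi/2 * (φ t).re)) (Icc 0 1) :=
      (Real.continuous_cos.comp (continuous_const.mul Complex.continuous_re)).comp_continuousOn
        hφcont
    have hne : ∀ t ∈ Icc (0:ℝ) 1, Real.cos (Real.pi/2 * (φ t).re) ≠ 0 := fun t ht =>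
      ne_of_gt (strip_cos_pos (hφs t ht).1 (hφs t ht).2)
    exact continuousOn_const.div hcos hne
  have hrhoU : ContinuousOn (fun t => rhoU (γ t)) (Icc 0 1) := by
    have habs : ContinuousOn (fun t => 1 - ‖γ t‖^2) (Icc 0 1) :=
      (continuous_const.sub ((continuous_pow 2).comp continuous_norm)).comp_continuousOn
        hγcont
    have hne : ∀ t ∈ Icc (0:ℝ) 1, 1 - ‖γ t‖^2 ≠ 0 := by
      intro t ht
      have h1 : ‖γ t‖ < 1 := hγm t ht
      have h0 : 0 ≤ ‖γ t‖ := norm_nonneg _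
      nlinarith
    exact continuousOn_const.div habs hne
  -- chain rule
  have hchain : ∀ t ∈ Icc (0:ℝ) 1, derivWithin φ (Icc 0 1) t
      = fderiv ℝ f (γ t) (derivWithin γ (Icc 0 1) t) := by
    intro t ht
    have hγd : HasDerivWithinAt γ (derivWithin γ (Icc 0 1) t) (Icc 0 1) t :=
      ((hγc.differentiableOn one_ne_zero) t ht).hasDerivWithinAt
    have hfz : HasFDerivAt f (fderiv ℝ f (γ t)) (γ t) :=
      ((hqr.1.differentiableOn one_ne_zero).differentiableAt
        (isOpen_discU.mem_nhds (hγm t ht))).hasFDerivAt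
    exact (hfz.comp_hasDerivWithinAt t hγd).derivWithin (huniq t ht)
  -- pointwise bound
  have hpt : ∀ t ∈ Icc (0:ℝ) 1,
      rhoS (φ t) * ‖derivWithin φ (Icc 0 1) t‖
        ≤ K * (rhoU (γ t) * ‖derivWithin γ (Icc 0 1) t‖) := by
    intro t ht
    rw [hchain t ht]
    have hb := fderiv_norm_bound f (γ t) (derivWithin γ (Icc 0 1) t)
    have hki := key_ineq hK hharm hqr hmap (hγm t ht)
    have hρ0 : 0 ≤ rhoS (φ t) := (rhoS_pos (hφs t ht)).le
    calc rhoS (φ t) * ‖fderiv ℝ f (γ t) (derivWithin γ (Icc 0 1) t)‖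
        ≤ rhoS (φ t) * ((‖wderiv f (γ t)‖ + ‖wderivBar f (γ t)‖) * ‖derivWithin γ (Icc 0 1) t‖) :=
          mul_le_mul_of_nonneg_left hb hρ0
      _ = (rhoS (f (γ t)) * (‖wderiv f (γ t)‖ + ‖wderivBar f (γ t)‖)) * ‖derivWithin γ (Icc 0 1) t‖ := by
          simp only [hφ, Function.comp_apply]; ring
      _ ≤ (K * rhoU (γ t)) * ‖derivWithin γ (Icc 0 1) t‖ :=
          mul_le_mul_of_nonneg_right hki (norm_nonneg _)
      _ = K * (rhoU (γ t) * ‖derivWithin γ (Icc 0 1) t‖) := by ring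
  -- a.e. rewriting of integrals
  have hne1 : ∀ᵐ x : ℝ, x ≠ 1 := by
    refine MeasureTheory.ae_iff.mpr ?_
    simpa using Real.volume_singleton
  have hae1 : hypLenS φ = ∫ t in (0:ℝ)..1, rhoS (φ t) * ‖derivWithin φ (Icc 0 1) t‖ := by
    rw [hypLenS]
    apply intervalIntegral.integral_congr_ae
    filter_upwards [hne1] with x hx hxI
    rw [Set.uIoc_of_le zero_le_one] at hxI
    have hx1 : x < 1 := lt_of_le_of_ne hxI.2 hx
    rw [derivWithin_of_mem_nhds (Icc_mem_nhds hxI.1 hx1)]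
  have hae2 : hypLenU γ = ∫ t in (0:ℝ)..1, rhoU (γ t) * ‖derivWithin γ (Icc 0 1) t‖ := by
    rw [hypLenU]
    apply intervalIntegral.integral_congr_ae
    filter_upwards [hne1] with x hx hxI
    rw [Set.uIoc_of_le zero_le_one] at hxI
    have hx1 : x < 1 := lt_of_le_of_ne hxI.2 hx
    rw [derivWithin_of_mem_nhds (Icc_mem_nhds hxI.1 hx1)]
  rw [hae1, hae2, ← intervalIntegral.integral_const_mul]
  have hint1 : IntervalIntegrable (fun t => rhoS (φ t) * ‖derivWithin φ (Icc 0 1) t‖)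
      MeasureTheory.volume 0 1 := by
    apply ContinuousOn.intervalIntegrable
    rw [Set.uIcc_of_le zero_le_one]
    exact hrhoS.mul hdφ.norm
  have hint2 : IntervalIntegrable (fun t => K * (rhoU (γ t) * ‖derivWithin γ (Icc 0 1) t‖))
      MeasureTheory.volume 0 1 := by
    apply ContinuousOn.intervalIntegrable
    rw [Set.uIcc_of_le zero_le_one]
    exact continuousOn_const.mul (hrhoU.mul hdγ.norm)
  exact intervalIntegral.integral_mono_on zero_le_one hint1 hint2 hpt

-- ===== main theorem =====
/-- Schwarz–Pick lemma for harmonic K-quasiregular maps into the strip. -/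
theorem schwarz_pick_hqr (K : ℝ) (hK : 1 ≤ K) (f : ℂ → ℂ)
    (hharm : HarmonicOnC f discU) (hqr : QRegOn K f discU)
    (hmap : Set.MapsTo f discU stripS) :
    ∀ z₁ ∈ discU, ∀ z₂ ∈ discU, dS (f z₁) (f z₂) ≤ K * dU z₁ z₂ := by
  intro z₁ hz₁ z₂ hz₂
  have hK0 : (0:ℝ) < K := lt_of_lt_of_le one_pos hK
  rw [dU]
  set B := { L : ℝ | ∃ γ : ℝ → ℂ, ContDiffOn ℝ 1 γ (Icc 0 1) ∧ γ 0 = z₁ ∧ γ 1 = z₂ ∧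
    (∀ t ∈ Icc (0:ℝ) 1, γ t ∈ discU) ∧ L = hypLenU γ } with hBdef
  -- B is nonempty (line segment)
  have hBne : B.Nonempty := by
    refine ⟨hypLenU (fun t : ℝ => z₁ + t • (z₂ - z₁)), fun t : ℝ => z₁ + t • (z₂ - z₁), ?_, by simp, by simp, ?_, rfl⟩
    · exact (contDiff_const.add (contDiff_id.smul contDiff_const)).contDiffOn
    · intro t ht
      have hconv : Convex ℝ discU := by rw [discU_eq]; exact convex_ball 0 1
      have := hconv hz₁ hz₂ (by linarith [ht.2] : (0:ℝ) ≤ 1 - t) ht.1 (by ring)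
      have heq : (1 - t) • z₁ + t • z₂ = z₁ + t • (z₂ - z₁) := by
        simp [sub_smul, smul_sub, one_smul]
        ring
      rwa [heq] at this
  -- every element of B dominates dS/K
  have hB : ∀ L ∈ B, dS (f z₁) (f z₂) / K ≤ L := by
    rintro L ⟨γ, hγc, hγ0, hγ1, hγm, rfl⟩
    rw [div_le_iff₀ hK0, mul_comm]
    -- dS ≤ hypLenS (f ∘ γ) ≤ K * hypLenU γ
    have hmem : hypLenS (f ∘ γ) ∈ { L : ℝ | ∃ γ' : ℝ → ℂ, ContDiffOn ℝ 1 γ' (Icc 0 1) ∧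
        γ' 0 = f z₁ ∧ γ' 1 = f z₂ ∧ (∀ t ∈ Icc (0:ℝ) 1, γ' t ∈ stripS) ∧ L = hypLenS γ' } := by
      refine ⟨f ∘ γ, hqr.1.comp hγc (fun t ht => hγm t ht), ?_, ?_, ?_, rfl⟩
      · show f (γ 0) = f z₁; rw [hγ0]
      · show f (γ 1) = f z₂; rw [hγ1]
      · intro t ht; exact hmap (hγm t ht)
    have hbdd : BddBelow { L : ℝ | ∃ γ' : ℝ → ℂ, ContDiffOn ℝ 1 γ' (Icc 0 1) ∧
        γ' 0 = f z₁ ∧ γ' 1 = f z₂ ∧ (∀ t ∈ Icc (0:ℝ) 1, γ' t ∈ stripS) ∧ L = hypLenS γ' } := by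
      refine ⟨0, ?_⟩
      rintro L ⟨γ', hγ'c, _, _, hγ'm, rfl⟩
      apply intervalIntegral.integral_nonneg zero_le_one
      intro u hu
      exact mul_nonneg (rhoS_pos (hγ'm u hu)).le (norm_nonneg _)
    have h1 : dS (f z₁) (f z₂) ≤ hypLenS (f ∘ γ) := by
      rw [dS]
      exact csInf_le hbdd hmem
    exact h1.trans (pushforward_len hK hharm hqr hmap hγc hγm)
  have := le_csInf hBne hB
  rw [div_le_iff₀ hK0] at this
  rw [mul_comm] at this
  exact this
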